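/- Let p be an odd prime, n ≥ 1, m = ⌊n/2⌋, u = 1 + p^{n−m} ∈ ℤ/p^nℤ, and let G = ℤ/p^nℤ with λ : G → B = Perm(G) the (additive) left regular representation λ(g)(x) = g + x. For e ∈ ℕ let τ_e ∈ B be the permutation x ↦ u^e·x + 1. Then S(G) ∩ R(G) = { ⟨τ_e⟩ : 0 ≤ e < p^m }, and the map e ↦ ⟨τ_e⟩ is injective on {0, …, p^m − 1}; in particular |S(G) ∩ R(G)| = p^m. -/

import Mathlib

open Equiv Pointwise

/-- A subgroup `N ≤ Perm X` is regular if for all `x y : X` there is exactly one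
element of `N` sending `x` to `y`. -/
def IsRegularSubgroup {X : Type*} (N : Subgroup (Equiv.Perm X)) : Prop :=
  ∀ x y : X, ∃! η : N, (η : Equiv.Perm X) x = y

/-- The left regular representation of an additive group `A`, `λ(g)(x) = g + x`,
as a monoid homomorphism `Multiplicative A →* Perm A`. -/
def addLamHom (A : Type*) [AddGroup A] : Multiplicative A →* Equiv.Perm A where
  toFun a := Equiv.addLeft (Multiplicative.toAdd a)
  map_one' := by ext x; simp
  map_mul' a b := by ext x; simp [Equiv.Perm.mul_apply, add_assoc]

/-- The image `λ(A)` of the left regular representation. -/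
def lamA (A : Type*) [AddGroup A] : Subgroup (Equiv.Perm A) := (addLamHom A).range

/-- The holomorph `Hol(A) = Norm_B(λ(A))` of an additive group `A`. -/
def HolA (A : Type*) [AddGroup A] : Subgroup (Equiv.Perm A) := Subgroup.normalizer (lamA A : Set (Equiv.Perm A))

/-- `S(G)` for `G = ℤ/pⁿℤ`: regular cyclic subgroups of order `pⁿ` inside `Hol(G)`.
(Here `N ≅ G` means `N` is cyclic of order `pⁿ`.) -/
def SA (p n : ℕ) : Set (Subgroup (Equiv.Perm (ZMod (p ^ n)))) :=
  {N | IsRegularSubgroup N ∧ IsCyclic N ∧ Nat.card N = p ^ n ∧ N ≤ HolA (ZMod (p ^ n))}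

/-- `R(G)` for `G = ℤ/pⁿℤ`: regular cyclic subgroups of order `pⁿ` normalized by `λ(G)`. -/
def RA (p n : ℕ) : Set (Subgroup (Equiv.Perm (ZMod (p ^ n)))) :=
  {N | IsRegularSubgroup N ∧ IsCyclic N ∧ Nat.card N = p ^ n ∧
    lamA (ZMod (p ^ n)) ≤ Subgroup.normalizer (N : Set (Equiv.Perm (ZMod (p ^ n))))}
open Equiv Pointwise Subgroup

namespace SRaux

variable {q : ℕ}

lemma cast_sum_id (q k : ℕ) :
    2 * ((∑ i ∈ Finset.range k, i : ℕ) : ZMod q) = (k : ZMod q) * ((k : ZMod q) - 1) := by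
  induction k with
  | zero => simp
  | succ k ih =>
    rw [Finset.sum_range_succ]
    push_cast at ih ⊢
    linear_combination ih

lemma pow_nilsq (z : ZMod q) (hz : z * z = 0) (k : ℕ) :
    (1 + z) ^ k = 1 + (k : ZMod q) * z := by
  induction k with
  | zero => simp
  | succ k ih =>
    rw [pow_succ, ih]
    push_cast
    linear_combination (k : ZMod q) * hz

lemma geom_nilsq (z : ZMod q) (hz : z * z = 0) (k : ℕ) :
    (∑ i ∈ Finset.range k, (1 + z) ^ i)
      = (k : ZMod q) + z * ((∑ i ∈ Finset.range k, i : ℕ) : ZMod q) := by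
  induction k with
  | zero => simp
  | succ k ih =>
    rw [Finset.sum_range_succ, Finset.sum_range_succ (f := fun i : ℕ => i), ih, pow_nilsq z hz]
    push_cast
    ring

lemma aff_pow (f : Equiv.Perm (ZMod q)) (a b : ZMod q) (hf : ∀ x, f x = a * x + b) :
    ∀ (k : ℕ) (x : ZMod q),
      (f ^ k) x = a ^ k * x + (∑ i ∈ Finset.range k, a ^ i) * b := by
  intro k
  induction k with
  | zero => intro x; simp
  | succ k ih =>
    intro x
    rw [pow_succ', Equiv.Perm.mul_apply, ih, hf, geom_sum_succ, pow_succ]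
    ring

lemma isUnit_add_nilsq (v w : ZMod q) (hv : IsUnit v) (hw : w * w = 0) :
    IsUnit (v + w) := by
  have hnil : IsNilpotent w := ⟨2, by rw [sq, hw]⟩
  exact hnil.isUnit_add_left_of_commute hv (Commute.all _ _)

lemma eq_zero_of_mul_unit (x u : ZMod q) (hu : IsUnit u) (h : x * u = 0) : x = 0 := by
  obtain ⟨w, hw⟩ := hu.exists_right_inv
  calc x = x * (u * w) := by rw [hw, mul_one]
  _ = x * u * w := by ring
  _ = 0 := by rw [h, zero_mul]

lemma isCyclic_zpowers {G : Type*} [Group G] (g : G) : IsCyclic (Subgroup.zpowers g) := by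
  refine ⟨⟨⟨g, Subgroup.mem_zpowers g⟩, fun x => ?_⟩⟩
  obtain ⟨k, hk⟩ := Subgroup.mem_zpowers_iff.mp x.2
  exact Subgroup.mem_zpowers_iff.mpr ⟨k, Subtype.ext (by simpa using hk)⟩

lemma perm_zpow_eq_of_apply_eq {X : Type*} (f : Equiv.Perm X)
    (hfix : ∀ (d : ℤ) (x : X), (f ^ d) x = x → f ^ d = 1)
    (i j : ℤ) (x : X) (h : (f ^ i) x = (f ^ j) x) : f ^ i = f ^ j := by
  have h1 : (f ^ (i - j)) ((f ^ j) x) = (f ^ j) x := by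
    rw [← Equiv.Perm.mul_apply, ← zpow_add, sub_add_cancel, h]
  have h2 := hfix (i - j) _ h1
  calc f ^ i = f ^ (i - j) * f ^ j := by rw [← zpow_add, sub_add_cancel]
  _ = f ^ j := by rw [h2, one_mul]

lemma regular_zpowers {X : Type*} [Finite X] (f : Equiv.Perm X)
    (hcard : Nat.card X = orderOf f)
    (hfix : ∀ (d : ℤ) (x : X), (f ^ d) x = x → f ^ d = 1) :
    IsRegularSubgroup (Subgroup.zpowers f) := by
  intro x y
  have hinj : Function.Injective (fun i : Fin (orderOf f) => (f ^ (i : ℕ)) x) := by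
    intro i j hij
    have h1 : f ^ ((i : ℕ) : ℤ) = f ^ ((j : ℕ) : ℤ) := by
      apply perm_zpow_eq_of_apply_eq f hfix _ _ x
      simpa [zpow_natCast] using hij
    rw [zpow_natCast, zpow_natCast] at h1
    exact Fin.ext (pow_injOn_Iio_orderOf i.isLt j.isLt h1)
  have hsurj : Function.Surjective (fun i : Fin (orderOf f) => (f ^ (i : ℕ)) x) := by
    refine ((Nat.bijective_iff_injective_and_card _).mpr ⟨hinj, ?_⟩).surjective
    simp [hcard]
  obtain ⟨k, hk⟩ := hsurj y
  refine ⟨⟨f ^ (k : ℕ), Subgroup.pow_mem _ (Subgroup.mem_zpowers f) _⟩, hk, ?_⟩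
  rintro ⟨η, hη⟩ hηx
  obtain ⟨d, rfl⟩ := Subgroup.mem_zpowers_iff.mp hη
  have : f ^ d = f ^ ((k : ℕ) : ℤ) := by
    apply perm_zpow_eq_of_apply_eq f hfix _ _ x
    rw [zpow_natCast]
    exact hηx.trans hk.symm
  exact Subtype.ext (by show f ^ d = f ^ ((k : ℕ) : ℤ); rw [this])

lemma exists_pow_eq {G : Type*} [Group G] [Finite G] {f g : G}
    (h : g ∈ Subgroup.zpowers f) : ∃ k : ℕ, f ^ k = g := by
  obtain ⟨k, hk⟩ := mem_powers_iff_mem_zpowers.mpr h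
  exact ⟨k, hk⟩

lemma lam_apply {A : Type*} [AddGroup A] (t x : A) :
    (addLamHom A (Multiplicative.ofAdd t)) x = t + x := rfl

lemma lam_inv_apply {A : Type*} [AddGroup A] (t x : A) :
    ((addLamHom A (Multiplicative.ofAdd t))⁻¹ : Equiv.Perm A) x = -t + x := by
  rw [← map_inv]; rfl

lemma key_add {q : ℕ} (π : Equiv.Perm (ZMod q)) (h : π ∈ HolA (ZMod q)) :
    ∀ g y : ZMod q, π (g + y) = (π g - π 0) + π y := by
  intro g y
  have h1 : π * (addLamHom (ZMod q) (Multiplicative.ofAdd g)) * π⁻¹ ∈ lamA (ZMod q) :=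
    (Subgroup.mem_normalizer_iff.mp h _).mp ⟨Multiplicative.ofAdd g, rfl⟩
  obtain ⟨g', hg'⟩ := h1
  have h2 : ∀ z, Multiplicative.toAdd g' + z = π (g + π⁻¹ z) := by
    intro z
    have h3 : (addLamHom (ZMod q) g') z
        = (π * (addLamHom (ZMod q) (Multiplicative.ofAdd g)) * π⁻¹) z := by rw [hg']
    exact h3
  have h4 := h2 (π y)
  have h5 := h2 (π 0)
  rw [show ∀ z, π⁻¹ (π z) = z from fun z => π.symm_apply_apply z] at h4 h5
  rw [add_zero] at h5
  linear_combination -h4 + h5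

lemma affine_of_mem_HolA {q : ℕ} [NeZero q] (π : Equiv.Perm (ZMod q))
    (h : π ∈ HolA (ZMod q)) (x : ZMod q) : π x = (π 1 - π 0) * x + π 0 := by
  have key := key_add π h
  have hψ : ∀ k : ℕ, π ((k : ZMod q)) - π 0 = (k : ZMod q) * (π 1 - π 0) := by
    intro k
    induction k with
    | zero => simp
    | succ k ih =>
      have hthis := key (k : ZMod q) 1
      push_cast
      linear_combination hthis + ih
  have hx : ((x.val : ℕ) : ZMod q) = x := ZMod.natCast_rightInverse x
  calc π x = π ((x.val : ℕ) : ZMod q) := by rw [hx]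
  _ = ((x.val : ℕ) : ZMod q) * (π 1 - π 0) + π 0 := by linear_combination hψ x.val
  _ = (π 1 - π 0) * x + π 0 := by rw [hx]; ring

lemma isUnit_coeff_of_mem_HolA {q : ℕ} [NeZero q] (π : Equiv.Perm (ZMod q))
    (h : π ∈ HolA (ZMod q)) : IsUnit (π 1 - π 0) := by
  obtain ⟨x, hx⟩ := π.surjective (1 + π 0)
  refine IsUnit.of_mul_eq_one x ?_
  have h2 := affine_of_mem_HolA π h x
  rw [hx] at h2
  linear_combination -h2

end SRaux

theorem SR_eq_tau_powers (p n : ℕ) (hp : p.Prime) (hodd : Odd p) (hn : 1 ≤ n)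
    (m : ℕ) (hm : m = n / 2)
    (τ : ℕ → Equiv.Perm (ZMod (p ^ n)))
    (hτ : ∀ e (x : ZMod (p ^ n)),
      τ e x = (1 + (p : ZMod (p ^ n)) ^ (n - m)) ^ e * x + 1) :
    SA p n ∩ RA p n = {N | ∃ e < p ^ m, N = Subgroup.zpowers (τ e)} ∧
    Set.InjOn (fun e => Subgroup.zpowers (τ e)) (Set.Iio (p ^ m)) ∧
    (SA p n ∩ RA p n).ncard = p ^ m := by
  classical
  have hq1 : 1 < p ^ n := Nat.one_lt_pow (by omega) hp.one_lt
  haveI : NeZero (p ^ n) := ⟨by omega⟩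
  set c : ZMod (p ^ n) := (p : ZMod (p ^ n)) ^ (n - m) with hc
  have hpn0 : (p : ZMod (p ^ n)) ^ n = 0 := by
    rw [← Nat.cast_pow, ZMod.natCast_self]
  have hcsq : c * c = 0 := by
    rw [hc, ← pow_add, show (n - m) + (n - m) = n + (n - 2 * m) by omega, pow_add, hpn0,
      zero_mul]
  have hpmc : (p : ZMod (p ^ n)) ^ m * c = 0 := by
    rw [hc, ← pow_add, show m + (n - m) = n by omega, hpn0]
  have h2u : IsUnit (2 : ZMod (p ^ n)) := by
    have hp2 : p ≠ 2 := by rintro rfl; exact (Nat.not_odd_iff_even.mpr even_two) hodd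
    have h2 : ((2 : ℕ) : ZMod (p ^ n)) = 2 := by norm_num
    rw [← h2, ZMod.isUnit_iff_coprime]
    exact Nat.Coprime.pow_right _ ((Nat.coprime_primes Nat.prime_two hp).mpr (Ne.symm hp2))
  have hcan : ∀ x y : ZMod (p ^ n), 2 * x = 2 * y → x = y := by
    intro x y hxy
    have h0 : (x - y) * 2 = 0 := by linear_combination hxy
    have h1 := SRaux.eq_zero_of_mul_unit _ _ h2u h0
    linear_combination h1
  have hτf : ∀ e (x : ZMod (p ^ n)), τ e x = (1 + (e : ZMod (p ^ n)) * c) * x + 1 := by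
    intro e x; rw [hτ, SRaux.pow_nilsq c hcsq e]
  have hec2 : ∀ e : ℕ, ((e : ZMod (p ^ n)) * c) * ((e : ZMod (p ^ n)) * c) = 0 := by
    intro e; linear_combination ((e : ZMod (p ^ n)) * (e : ZMod (p ^ n))) * hcsq
  have hTpow : ∀ (e k : ℕ) (x : ZMod (p ^ n)), ((τ e) ^ k) x
      = (1 + (e : ZMod (p ^ n)) * (k : ZMod (p ^ n)) * c) * x
        + ((k : ZMod (p ^ n))
          + (e : ZMod (p ^ n)) * c * ((∑ i ∈ Finset.range k, i : ℕ) : ZMod (p ^ n))) := by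
    intro e k x
    rw [SRaux.aff_pow (τ e) _ 1 (hτf e) k x, SRaux.pow_nilsq _ (hec2 e) k,
      SRaux.geom_nilsq _ (hec2 e) k, mul_one]
    ring
  have hkey0 : ∀ (e k : ℕ) (x : ZMod (p ^ n)), ((τ e) ^ k) x = x → (k : ZMod (p ^ n)) = 0 := by
    intro e k x hfx
    rw [hTpow] at hfx
    have hsum := SRaux.cast_sum_id (p ^ n) k
    have hmain : (k : ZMod (p ^ n))
        * (2 + ((e : ZMod (p ^ n)) * (2 * x + (k : ZMod (p ^ n)) - 1)) * c) = 0 := by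
      linear_combination 2 * hfx - (e : ZMod (p ^ n)) * c * hsum
    have hunit : IsUnit (2 + ((e : ZMod (p ^ n)) * (2 * x + (k : ZMod (p ^ n)) - 1)) * c) :=
      SRaux.isUnit_add_nilsq _ _ h2u (by
        linear_combination ((e : ZMod (p ^ n)) * (2 * x + (k : ZMod (p ^ n)) - 1)
          * ((e : ZMod (p ^ n)) * (2 * x + (k : ZMod (p ^ n)) - 1))) * hcsq)
    exact SRaux.eq_zero_of_mul_unit _ _ hunit hmain
  have hvanish : ∀ e : ℕ, (τ e) ^ (p ^ n) = 1 := by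
    intro e
    ext x
    rw [hTpow]
    have hK : ((p ^ n : ℕ) : ZMod (p ^ n)) = 0 := ZMod.natCast_self _
    have hsum := SRaux.cast_sum_id (p ^ n) (p ^ n)
    have hT0 : (e : ZMod (p ^ n)) * c
        * ((∑ i ∈ Finset.range (p ^ n), i : ℕ) : ZMod (p ^ n)) = 0 := by
      apply hcan _ 0
      rw [mul_zero]
      linear_combination (e : ZMod (p ^ n)) * c * hsum
        + (e : ZMod (p ^ n)) * c * (((p ^ n : ℕ) : ZMod (p ^ n)) - 1) * hK
    simp only [Equiv.Perm.one_apply]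
    linear_combination (x * (e : ZMod (p ^ n)) * c + 1) * hK + hT0
  have hord : ∀ e : ℕ, orderOf (τ e) = p ^ n := by
    intro e
    have h1 : orderOf (τ e) ∣ p ^ n := orderOf_dvd_of_pow_eq_one (hvanish e)
    have h3 : ((orderOf (τ e) : ℕ) : ZMod (p ^ n)) = 0 :=
      hkey0 e _ 0 (by rw [pow_orderOf_eq_one]; rfl)
    have h4 : p ^ n ∣ orderOf (τ e) := (ZMod.natCast_eq_zero_iff _ _).mp h3
    exact Nat.dvd_antisymm h1 h4
  have hfix : ∀ (e : ℕ) (d : ℤ) (x : ZMod (p ^ n)), ((τ e) ^ d) x = x → (τ e) ^ d = 1 := by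
    intro e d x hdx
    have hmem : (τ e) ^ d ∈ Subgroup.zpowers (τ e) := zpow_mem (Subgroup.mem_zpowers _) d
    obtain ⟨k, hk⟩ := SRaux.exists_pow_eq hmem
    have h0 : ((k : ℕ) : ZMod (p ^ n)) = 0 := hkey0 e k x (by rw [hk]; exact hdx)
    have h5 : p ^ n ∣ k := (ZMod.natCast_eq_zero_iff _ _).mp h0
    rw [← hk]
    exact orderOf_dvd_iff_pow_eq_one.mp (by rw [hord e]; exact h5)
  have hreg : ∀ e : ℕ, IsRegularSubgroup (Subgroup.zpowers (τ e)) := fun e =>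
    SRaux.regular_zpowers (τ e) (by rw [hord e, Nat.card_zmod]) (hfix e)
  have huinv : ∀ e : ℕ, (1 + (e : ZMod (p ^ n)) * c) * (1 - (e : ZMod (p ^ n)) * c) = 1 := by
    intro e
    linear_combination (-((e : ZMod (p ^ n)) * (e : ZMod (p ^ n)))) * hcsq
  have hconjHol : ∀ (e : ℕ) (g : ZMod (p ^ n)),
      τ e * addLamHom (ZMod (p ^ n)) (Multiplicative.ofAdd g) * (τ e)⁻¹
        = addLamHom (ZMod (p ^ n))
            (Multiplicative.ofAdd ((1 + (e : ZMod (p ^ n)) * c) * g)) := by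
    intro e g
    ext x
    simp only [Equiv.Perm.mul_apply, SRaux.lam_apply]
    rw [hτf]
    have h6 : (1 + (e : ZMod (p ^ n)) * c) * ((τ e)⁻¹ x) + 1 = x := by
      conv_rhs => rw [← show (τ e) ((τ e)⁻¹ x) = x from (τ e).apply_symm_apply x, hτf]
    linear_combination h6
  have hHol : ∀ e : ℕ, τ e ∈ HolA (ZMod (p ^ n)) := by
    intro e
    rw [HolA, Subgroup.mem_normalizer_iff]
    intro h
    constructor
    · rintro ⟨g, rfl⟩
      exact ⟨Multiplicative.ofAdd ((1 + (e : ZMod (p ^ n)) * c) * Multiplicative.toAdd g),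
        (hconjHol e (Multiplicative.toAdd g)).symm⟩
    · intro hmem
      obtain ⟨g', hg'⟩ := hmem
      have h7 := hconjHol e ((1 - (e : ZMod (p ^ n)) * c) * Multiplicative.toAdd g')
      rw [show (1 + (e : ZMod (p ^ n)) * c)
          * ((1 - (e : ZMod (p ^ n)) * c) * Multiplicative.toAdd g')
          = Multiplicative.toAdd g' by rw [← mul_assoc, huinv e, one_mul]] at h7
      have h8 : τ e * (addLamHom (ZMod (p ^ n)) (Multiplicative.ofAdd
            ((1 - (e : ZMod (p ^ n)) * c) * Multiplicative.toAdd g'))) * (τ e)⁻¹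
          = τ e * h * (τ e)⁻¹ := by rw [h7]; exact hg'
      exact ⟨_, mul_left_cancel (mul_right_cancel h8)⟩
  have hconjR : ∀ (e k : ℕ) (t : ZMod (p ^ n)),
      addLamHom (ZMod (p ^ n)) (Multiplicative.ofAdd t) * (τ e) ^ k
          * (addLamHom (ZMod (p ^ n)) (Multiplicative.ofAdd t))⁻¹
        = (τ e) ^ (k + (-((e : ZMod (p ^ n)) * (k : ZMod (p ^ n)) * c * t)).val) := by
    intro e k t
    ext x
    simp only [Equiv.Perm.mul_apply, SRaux.lam_apply, SRaux.lam_inv_apply]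
    rw [hTpow, hTpow]
    set δ : ZMod (p ^ n) := -((e : ZMod (p ^ n)) * (k : ZMod (p ^ n)) * c * t) with hδ
    have hδcast : ((δ.val : ℕ) : ZMod (p ^ n)) = δ := ZMod.natCast_rightInverse δ
    have hδc : δ * c = 0 := by
      rw [hδ]
      linear_combination (-((e : ZMod (p ^ n)) * (k : ZMod (p ^ n)) * t)) * hcsq
    have hsk := SRaux.cast_sum_id (p ^ n) k
    have hsk' := SRaux.cast_sum_id (p ^ n) (k + δ.val)
    apply hcan
    push_cast at hsk hsk' ⊢
    rw [hδcast] at hsk' ⊢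
    linear_combination (e : ZMod (p ^ n)) * c * hsk - (e : ZMod (p ^ n)) * c * hsk'
      + (-2 * (e : ZMod (p ^ n)) * x - 2 * (e : ZMod (p ^ n)) * (k : ZMod (p ^ n))
        - (e : ZMod (p ^ n)) * δ + (e : ZMod (p ^ n))) * hδc - 2 * hδ
  have hRA : ∀ e : ℕ, lamA (ZMod (p ^ n)) ≤ Subgroup.normalizer (Subgroup.zpowers (τ e) : Set (Equiv.Perm (ZMod (p ^ n)))) := by
    intro e π hπ
    obtain ⟨g, rfl⟩ := hπ
    rw [Subgroup.mem_normalizer_iff]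
    intro h
    have hinvlam : addLamHom (ZMod (p ^ n)) (Multiplicative.ofAdd (-(Multiplicative.toAdd g)))
        = (addLamHom (ZMod (p ^ n)) g)⁻¹ := by rw [← map_inv]; rfl
    constructor
    · intro hh
      obtain ⟨k, hk⟩ := SRaux.exists_pow_eq hh
      rw [← hk,
        show addLamHom (ZMod (p ^ n)) g
          = addLamHom (ZMod (p ^ n)) (Multiplicative.ofAdd (Multiplicative.toAdd g)) from rfl,
        hconjR e k (Multiplicative.toAdd g)]
      exact Subgroup.pow_mem _ (Subgroup.mem_zpowers _) _
    · intro hh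
      obtain ⟨k, hk⟩ := SRaux.exists_pow_eq hh
      have h10 : h = addLamHom (ZMod (p ^ n)) (Multiplicative.ofAdd (-(Multiplicative.toAdd g)))
          * ((τ e) ^ k)
          * (addLamHom (ZMod (p ^ n)) (Multiplicative.ofAdd (-(Multiplicative.toAdd g))))⁻¹ := by
        rw [hinvlam, hk]
        group
      rw [h10, hconjR]
      exact Subgroup.pow_mem _ (Subgroup.mem_zpowers _) _
  have hcardz : ∀ e : ℕ, Nat.card (Subgroup.zpowers (τ e)) = p ^ n := by
    intro e; rw [Nat.card_zpowers, hord e]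
  have hSR : ∀ e : ℕ, Subgroup.zpowers (τ e) ∈ SA p n ∩ RA p n := fun e =>
    ⟨⟨hreg e, SRaux.isCyclic_zpowers _, hcardz e, Subgroup.zpowers_le.mpr (hHol e)⟩,
      ⟨hreg e, SRaux.isCyclic_zpowers _, hcardz e, hRA e⟩⟩
  have hconv : ∀ N ∈ SA p n ∩ RA p n, ∃ e < p ^ m, N = Subgroup.zpowers (τ e) := by
    rintro N ⟨⟨hregN, hcycN, hcardN, hholN⟩, ⟨-, -, -, hnormN⟩⟩
    obtain ⟨⟨σ, hσN⟩, hgen⟩ := hcycN.exists_generator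
    have hNz : N = Subgroup.zpowers σ := by
      apply le_antisymm
      · intro h hh
        obtain ⟨k, hk⟩ := Subgroup.mem_zpowers_iff.mp (hgen ⟨h, hh⟩)
        exact Subgroup.mem_zpowers_iff.mpr ⟨k, by simpa using congrArg Subtype.val hk⟩
      · exact Subgroup.zpowers_le.mpr hσN
    set a : ZMod (p ^ n) := σ 1 - σ 0 with ha
    set b : ZMod (p ^ n) := σ 0 with hb
    have haff : ∀ x, σ x = a * x + b := fun x => SRaux.affine_of_mem_HolA σ (hholN hσN) x
    have hσpow : ∀ (k : ℕ) (x), (σ ^ k) x = a ^ k * x + (∑ i ∈ Finset.range k, a ^ i) * b :=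
      SRaux.aff_pow σ a b haff
    obtain ⟨η, hη1, -⟩ := hregN 0 1
    obtain ⟨k₀, hk₀⟩ := SRaux.exists_pow_eq (hNz.le η.2)
    have hb1 : (∑ i ∈ Finset.range k₀, a ^ i) * b = 1 := by
      have h11 := hσpow k₀ 0
      rw [hk₀, hη1] at h11
      linear_combination -h11
    have hbu : IsUnit b := IsUnit.of_mul_eq_one _ (by rw [mul_comm]; exact hb1)
    have hlamb : addLamHom (ZMod (p ^ n)) (Multiplicative.ofAdd b) ∈ lamA (ZMod (p ^ n)) :=
      ⟨_, rfl⟩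
    have hc2' : (addLamHom (ZMod (p ^ n)) (Multiplicative.ofAdd b)) * σ
        * (addLamHom (ZMod (p ^ n)) (Multiplicative.ofAdd b))⁻¹ ∈ N :=
      (Subgroup.mem_normalizer_iff.mp (hnormN hlamb) σ).mp hσN
    obtain ⟨k₁, hk₁⟩ := SRaux.exists_pow_eq (hNz.le hc2')
    have he0 : (∑ i ∈ Finset.range k₁, a ^ i) * b = (2 - a) * b := by
      have h11 : (σ ^ k₁) 0 = (addLamHom (ZMod (p ^ n)) (Multiplicative.ofAdd b) * σ
          * (addLamHom (ZMod (p ^ n)) (Multiplicative.ofAdd b))⁻¹) 0 := by rw [hk₁]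
      rw [hσpow] at h11
      simp only [Equiv.Perm.mul_apply, SRaux.lam_apply, SRaux.lam_inv_apply] at h11
      rw [haff] at h11
      linear_combination h11
    have he1 : a ^ k₁ = a := by
      have h12 : (σ ^ k₁) 1 = (addLamHom (ZMod (p ^ n)) (Multiplicative.ofAdd b) * σ
          * (addLamHom (ZMod (p ^ n)) (Multiplicative.ofAdd b))⁻¹) 1 := by rw [hk₁]
      rw [hσpow] at h12
      simp only [Equiv.Perm.mul_apply, SRaux.lam_apply, SRaux.lam_inv_apply] at h12
      rw [haff] at h12
      linear_combination h12 - he0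
    have hS1 : (∑ i ∈ Finset.range k₁, a ^ i) = 2 - a := by
      obtain ⟨w, hw⟩ := hbu.exists_right_inv
      calc (∑ i ∈ Finset.range k₁, a ^ i) = (∑ i ∈ Finset.range k₁, a ^ i) * (b * w) := by
            rw [hw, mul_one]
      _ = ((∑ i ∈ Finset.range k₁, a ^ i) * b) * w := by ring
      _ = ((2 - a) * b) * w := by rw [he0]
      _ = (2 - a) * (b * w) := by ring
      _ = 2 - a := by rw [hw, mul_one]
    have hasq : (a - 1) * (a - 1) = 0 := by
      have h13 := geom_sum_mul a k₁
      rw [hS1, he1] at h13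
      linear_combination -h13
    obtain ⟨w, hw⟩ : ∃ w : ZMod (p ^ n), a - 1 = c * w := by
      have hvv : (((a - 1).val : ℕ) : ZMod (p ^ n)) = a - 1 := ZMod.natCast_rightInverse _
      by_cases hv0 : (a - 1).val = 0
      · refine ⟨0, by rw [mul_zero, ← hvv, hv0, Nat.cast_zero]⟩
      · have hv1 : (((a - 1).val * (a - 1).val : ℕ) : ZMod (p ^ n)) = 0 := by
          push_cast
          rw [hvv]
          exact hasq
        have hdvd : p ^ n ∣ (a - 1).val * (a - 1).val :=
          (ZMod.natCast_eq_zero_iff _ _).mp hv1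
        have hfac : n ≤ ((a - 1).val * (a - 1).val).factorization p :=
          (Nat.Prime.pow_dvd_iff_le_factorization hp (mul_ne_zero hv0 hv0)).mp hdvd
        rw [Nat.factorization_mul hv0 hv0] at hfac
        simp only [Finsupp.add_apply] at hfac
        have hle : n - m ≤ (a - 1).val.factorization p := by omega
        obtain ⟨w', hw'⟩ := (Nat.Prime.pow_dvd_iff_le_factorization hp hv0).mpr hle
        refine ⟨(w' : ZMod (p ^ n)), ?_⟩
        rw [← hvv, hw']
        push_cast
        rw [hc]
    have hwa : a = 1 + c * w := by linear_combination hw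
    have hcw2 : (c * w) * (c * w) = 0 := by linear_combination (w * w) * hcsq
    have hak : a ^ k₀ = 1 + (k₀ : ZMod (p ^ n)) * (c * w) := by
      rw [hwa]; exact SRaux.pow_nilsq _ hcw2 k₀
    have hτ'x : ∀ x, (σ ^ k₀) x = a ^ k₀ * x + 1 := by
      intro x; rw [hσpow, hb1]
    refine ⟨(((k₀ : ZMod (p ^ n)) * w).val % p ^ m),
      Nat.mod_lt _ (pow_pos hp.pos m), ?_⟩
    have heW : (((((k₀ : ZMod (p ^ n)) * w).val % p ^ m : ℕ)) : ZMod (p ^ n)) * c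
        = ((k₀ : ZMod (p ^ n)) * w) * c := by
      have h9 : ((((k₀ : ZMod (p ^ n)) * w).val : ℕ) : ZMod (p ^ n))
          = (k₀ : ZMod (p ^ n)) * w := ZMod.natCast_rightInverse _
      have h10 : ((k₀ : ZMod (p ^ n)) * w).val
          = p ^ m * (((k₀ : ZMod (p ^ n)) * w).val / p ^ m)
            + (((k₀ : ZMod (p ^ n)) * w).val % p ^ m) := (Nat.div_add_mod _ _).symm
      conv_rhs => rw [← h9, h10]
      push_cast
      linear_combination (-(((((k₀ : ZMod (p ^ n)) * w).val / p ^ m : ℕ)) : ZMod (p ^ n)))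
        * hpmc
    have hfinal : σ ^ k₀ = τ ((((k₀ : ZMod (p ^ n)) * w).val % p ^ m : ℕ)) := by
      ext x
      rw [hτ'x, hτf, hak]
      linear_combination (-x) * heW
    have hle2 : Subgroup.zpowers (τ ((((k₀ : ZMod (p ^ n)) * w).val % p ^ m : ℕ))) ≤ N := by
      rw [← hfinal]
      exact Subgroup.zpowers_le.mpr (N.pow_mem hσN k₀)
    exact (Subgroup.eq_of_le_of_card_ge hle2
      (le_of_eq (hcardN.trans (hcardz _).symm))).symm
  have hmainset : SA p n ∩ RA p n = {N | ∃ e < p ^ m, N = Subgroup.zpowers (τ e)} := by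
    ext N
    constructor
    · intro hN; exact hconv N hN
    · rintro ⟨e, he, rfl⟩; exact hSR e
  have hinj : Set.InjOn (fun e => Subgroup.zpowers (τ e)) (Set.Iio (p ^ m)) := by
    intro e he e' he' hEq0
    simp only [Set.mem_Iio] at he he'
    have hEq : Subgroup.zpowers (τ e) = Subgroup.zpowers (τ e') := hEq0
    have h1 : τ e' ∈ Subgroup.zpowers (τ e) := by rw [hEq]; exact Subgroup.mem_zpowers _
    obtain ⟨k, hk⟩ := SRaux.exists_pow_eq h1
    have h0 : ((τ e) ^ k) 0 = 1 := by rw [hk, hτf]; ring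
    rw [hTpow] at h0
    have hsum := SRaux.cast_sum_id (p ^ n) k
    have hK1 : ((k : ZMod (p ^ n)) - 1)
        * (2 + (e : ZMod (p ^ n)) * c * (k : ZMod (p ^ n))) = 0 := by
      linear_combination 2 * h0 - (e : ZMod (p ^ n)) * c * hsum
    have hKunit : IsUnit (2 + (e : ZMod (p ^ n)) * c * (k : ZMod (p ^ n))) :=
      SRaux.isUnit_add_nilsq _ _ h2u (by
        linear_combination ((e : ZMod (p ^ n)) * (k : ZMod (p ^ n)) * (e : ZMod (p ^ n))
          * (k : ZMod (p ^ n))) * hcsq)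
    have hK : (k : ZMod (p ^ n)) = 1 := by
      have h15 := SRaux.eq_zero_of_mul_unit _ _ hKunit hK1
      linear_combination h15
    have h1' : ((τ e) ^ k) 1 = τ e' 1 := by rw [hk]
    rw [hTpow, hτf] at h1'
    have hcc' : (e : ZMod (p ^ n)) * c = (e' : ZMod (p ^ n)) * c := by
      linear_combination h1' - h0 - (e : ZMod (p ^ n)) * c * hK
    have hmod : e ≡ e' [MOD p ^ m] := by
      have hcast : ((e * p ^ (n - m) : ℕ) : ZMod (p ^ n))
          = ((e' * p ^ (n - m) : ℕ) : ZMod (p ^ n)) := by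
        push_cast
        rw [← hc]
        exact hcc'
      have h14 := (ZMod.natCast_eq_natCast_iff _ _ _).mp hcast
      rw [show p ^ n = p ^ m * p ^ (n - m) by rw [← pow_add]; congr 1; omega] at h14
      exact Nat.ModEq.mul_right_cancel' (pow_pos hp.pos _).ne' h14
    rwa [Nat.ModEq, Nat.mod_eq_of_lt he, Nat.mod_eq_of_lt he'] at hmod
  refine ⟨hmainset, hinj, ?_⟩
  have himg : SA p n ∩ RA p n = (fun e => Subgroup.zpowers (τ e)) '' (Set.Iio (p ^ m)) := by
    rw [hmainset]
    ext N
    simp only [Set.mem_setOf_eq, Set.mem_image, Set.mem_Iio]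
    constructor
    · rintro ⟨e, he, rfl⟩; exact ⟨e, he, rfl⟩
    · rintro ⟨e, he, rfl⟩; exact ⟨e, he, rfl⟩
  rw [himg, Set.ncard_image_of_injOn hinj, ← Finset.coe_range, Set.ncard_coe_finset,
    Finset.card_range]
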